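/- For every integer k ≥ 1, every complex d×d density matrix ρ and every positive definite complex d×d matrix σ such that ρσ = σρ, the iterated mean divergence reduces to the classical Rényi divergence: Q^{im}_{α_k}(ρ‖σ) = tr(ρ^{α_k} σ^{1−α_k}), and hence D^{im}_{α_k}(ρ‖σ) = (1/(α_k−1))·log tr(ρ^{α_k} σ^{1−α_k}). -/

import Mathlib

open Matrix ComplexOrder

/-- `α_k = 1 + 1/(2^k - 1)`. -/
noncomputable def alphaIM (k : ℕ) : ℝ := 1 + 1 / (2 ^ k - 1)

/-- Feasibility of `(V₁, …, V_k, Z)` for the primal SDP defining the iterated mean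
divergence: `Z ≥ 0`, `V₁ + V₁* ≥ 0`, `Vᵢ* Vᵢ ≤ (Vᵢ₊₁ + Vᵢ₊₁*)/2` for `1 ≤ i ≤ k-1`, and
`V_k* V_k ≤ Z`.  The matrices are indexed by `ℕ`, with only indices `1, …, k` relevant. -/
def QimFeasible {n : Type*} [Fintype n] (k : ℕ)
    (V : ℕ → Matrix n n ℂ) (Z : Matrix n n ℂ) : Prop :=
  Z.PosSemidef ∧
  (V 1 + (V 1)ᴴ).PosSemidef ∧
  (∀ i : ℕ, 1 ≤ i → i < k →
    ((2 : ℂ)⁻¹ • (V (i + 1) + (V (i + 1))ᴴ) - (V i)ᴴ * V i).PosSemidef) ∧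
  (Z - (V k)ᴴ * V k).PosSemidef

/-- The objective `α_k · Re tr(ρ (V₁+V₁*)/2) − (α_k − 1) · Re tr(σ Z)`. -/
noncomputable def QimObj {n : Type*} [Fintype n] (k : ℕ)
    (ρ σ : Matrix n n ℂ) (V : ℕ → Matrix n n ℂ) (Z : Matrix n n ℂ) : ℝ :=
  alphaIM k * ((ρ * (V 1 + (V 1)ᴴ)).trace.re / 2) - (alphaIM k - 1) * (σ * Z).trace.re

/-- The iterated mean quantity `Q^{im}_{α_k}(ρ‖σ)`. -/
noncomputable def Qim {n : Type*} [Fintype n] (k : ℕ) (ρ σ : Matrix n n ℂ) : ℝ :=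
  sSup {q : ℝ | ∃ V Z, QimFeasible k V Z ∧ q = QimObj k ρ σ V Z}

/-- The iterated mean divergence `D^{im}_{α_k}(ρ‖σ) = (1/(α_k−1)) log Q^{im}_{α_k}(ρ‖σ)`. -/
noncomputable def Dim {n : Type*} [Fintype n] (k : ℕ) (ρ σ : Matrix n n ℂ) : ℝ :=
  (1 / (alphaIM k - 1)) * Real.log (Qim k ρ σ)

/-- Real powers of a Hermitian matrix, via the spectral decomposition (continuous
functional calculus); junk value `0` on non-Hermitian matrices. -/
noncomputable def mrpow {n : Type*} [Fintype n] [DecidableEq n]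
    (A : Matrix n n ℂ) (r : ℝ) : Matrix n n ℂ :=
  if h : A.IsHermitian then
    (h.eigenvectorUnitary : Matrix n n ℂ) *
      Matrix.diagonal (fun i => ((h.eigenvalues i ^ r : ℝ) : ℂ)) *
      (h.eigenvectorUnitary : Matrix n n ℂ)ᴴ
  else 0

/-- Matrix geometric mean `A # B = A^{1/2} (A^{-1/2} B A^{-1/2})^{1/2} A^{1/2}`. -/
noncomputable def geomMean {n : Type*} [Fintype n] [DecidableEq n]
    (A B : Matrix n n ℂ) : Matrix n n ℂ :=
  mrpow A (1/2) * mrpow (mrpow A (-(1/2)) * B * mrpow A (-(1/2))) (1/2) * mrpow A (1/2)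

/-- Partial trace over the first tensor factor. -/
noncomputable def ptrFst {α β : Type*} [Fintype α] (M : Matrix (α × β) (α × β) ℂ) :
    Matrix β β ℂ :=
  Matrix.of fun b b' => ∑ a, M (a, b) (a, b')

/-- Iterated geometric mean: `iterGeom σ A k = A₁ # (A₂ # (⋯ # (A_k # σ)⋯))`. -/
noncomputable def iterGeom {n : Type*} [Fintype n] [DecidableEq n]
    (σ : Matrix n n ℂ) : (ℕ → Matrix n n ℂ) → ℕ → Matrix n n ℂ
  | _, 0 => σ
  | A, (j + 1) => geomMean (A 1) (iterGeom σ (fun i => A (i + 1)) j)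

section Aux
set_option linter.unusedSectionVars false
variable {n : Type*} [Fintype n] [DecidableEq n]

lemma conj_mul_conj (U Da Db : Matrix n n ℂ) (hU : Uᴴ*U = 1) :
    (U*Da*Uᴴ)*(U*Db*Uᴴ) = U*(Da*Db)*Uᴴ := by
  have h1 : (U * Da * Uᴴ) * (U * Db * Uᴴ) = U * Da * (Uᴴ * U) * (Db * Uᴴ) := by
    simp only [Matrix.mul_assoc]
  rw [h1, hU, mul_one]
  simp only [Matrix.mul_assoc]

lemma star_mul_self_eigen {A : Matrix n n ℂ} (hA : A.IsHermitian) :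
    (hA.eigenvectorUnitary : Matrix n n ℂ)ᴴ * (hA.eigenvectorUnitary : Matrix n n ℂ) = 1 := by
  rw [← Matrix.star_eq_conjTranspose]
  exact Unitary.coe_star_mul_self hA.eigenvectorUnitary

lemma mul_self_star_eigen {A : Matrix n n ℂ} (hA : A.IsHermitian) :
    (hA.eigenvectorUnitary : Matrix n n ℂ) * (hA.eigenvectorUnitary : Matrix n n ℂ)ᴴ = 1 := by
  rw [← Matrix.star_eq_conjTranspose]
  exact Unitary.coe_mul_star_self hA.eigenvectorUnitary

lemma mrpow_isHermitian {A : Matrix n n ℂ} (hA : A.IsHermitian) (r : ℝ) :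
    (mrpow A r).IsHermitian := by
  rw [mrpow, dif_pos hA]
  apply Matrix.isHermitian_mul_mul_conjTranspose
  exact Matrix.isHermitian_diagonal_of_self_adjoint _ (by
    funext i; exact Complex.conj_ofReal _)

lemma mrpow_posSemidef {A : Matrix n n ℂ} (hA : A.PosSemidef) (r : ℝ) :
    (mrpow A r).PosSemidef := by
  rw [mrpow, dif_pos hA.1]
  apply Matrix.PosSemidef.mul_mul_conjTranspose_same
  refine Matrix.posSemidef_diagonal_iff.mpr fun i => ?_
  rw [Complex.zero_le_real]
  exact Real.rpow_nonneg (hA.eigenvalues_nonneg i) r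

lemma mrpow_mul_mrpow_aux {A : Matrix n n ℂ} (hA : A.IsHermitian) {a b : ℝ}
    (h : ∀ i, hA.eigenvalues i ^ a * hA.eigenvalues i ^ b = hA.eigenvalues i ^ (a + b)) :
    mrpow A a * mrpow A b = mrpow A (a + b) := by
  rw [mrpow, mrpow, mrpow, dif_pos hA, dif_pos hA, dif_pos hA,
    conj_mul_conj _ _ _ (star_mul_self_eigen hA), Matrix.diagonal_mul_diagonal]
  have h2 : (fun i => ((hA.eigenvalues i ^ a : ℝ) : ℂ) * ((hA.eigenvalues i ^ b : ℝ) : ℂ)) =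
      fun i => ((hA.eigenvalues i ^ (a + b) : ℝ) : ℂ) := by
    funext i; rw [← Complex.ofReal_mul, h i]
  rw [h2]

lemma mrpow_mul_mrpow_psd {A : Matrix n n ℂ} (hA : A.PosSemidef) {a b : ℝ}
    (ha : 0 ≤ a) (hb : 0 ≤ b) :
    mrpow A a * mrpow A b = mrpow A (a + b) :=
  mrpow_mul_mrpow_aux hA.1 fun i =>
    (Real.rpow_add_of_nonneg (hA.eigenvalues_nonneg i) ha hb).symm

lemma mrpow_mul_mrpow_pd {A : Matrix n n ℂ} (hA : A.PosDef) (a b : ℝ) :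
    mrpow A a * mrpow A b = mrpow A (a + b) :=
  mrpow_mul_mrpow_aux hA.1 fun i =>
    (Real.rpow_add (hA.eigenvalues_pos i) a b).symm

lemma mrpow_zero {A : Matrix n n ℂ} (hA : A.IsHermitian) : mrpow A 0 = 1 := by
  rw [mrpow, dif_pos hA]
  have h1 : (Matrix.diagonal (fun i => ((hA.eigenvalues i ^ (0:ℝ) : ℝ) : ℂ))) = 1 := by
    have : (fun i => ((hA.eigenvalues i ^ (0:ℝ) : ℝ) : ℂ)) = fun _ => 1 := by
      funext i; rw [Real.rpow_zero]; norm_num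
    rw [this, Matrix.diagonal_one]
  rw [h1, mul_one, mul_self_star_eigen hA]

lemma mrpow_one {A : Matrix n n ℂ} (hA : A.IsHermitian) : mrpow A 1 = A := by
  rw [mrpow, dif_pos hA]
  have h1 : (Matrix.diagonal (fun i => ((hA.eigenvalues i ^ (1:ℝ) : ℝ) : ℂ))) =
      Matrix.diagonal (RCLike.ofReal ∘ hA.eigenvalues) := by
    refine congrArg Matrix.diagonal (funext fun i => ?_)
    rw [Real.rpow_one]; rfl
  rw [h1, ← Matrix.star_eq_conjTranspose]
  exact hA.spectral_theorem.symm

lemma diag_comm_funext {M : Matrix n n ℂ} {v : n → ℝ} (f : ℝ → ℝ)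
    (h : M * Matrix.diagonal (fun i => ((v i : ℝ) : ℂ)) =
      Matrix.diagonal (fun i => ((v i : ℝ) : ℂ)) * M) :
    M * Matrix.diagonal (fun i => ((f (v i) : ℝ) : ℂ)) =
      Matrix.diagonal (fun i => ((f (v i) : ℝ) : ℂ)) * M := by
  ext i j
  have h' := congrFun (congrFun h i) j
  simp only [Matrix.mul_diagonal, Matrix.diagonal_mul] at h' ⊢
  rcases eq_or_ne (M i j) 0 with hz | hz
  · simp [hz]
  · have hv : (v j : ℂ) = (v i : ℂ) := by
      apply mul_right_cancel₀ hz
      rw [mul_comm ((v j : ℂ)), h', mul_comm]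
    have hvv : v j = v i := by exact_mod_cast hv
    rw [hvv, mul_comm]

lemma commute_mrpow {A B : Matrix n n ℂ} (hA : A.IsHermitian) (h : B * A = A * B) (r : ℝ) :
    B * mrpow A r = mrpow A r * B := by
  set U := (hA.eigenvectorUnitary : Matrix n n ℂ) with hUdef
  set D := Matrix.diagonal (fun i => ((hA.eigenvalues i : ℝ) : ℂ)) with hDdef
  have hU1 : Uᴴ * U = 1 := star_mul_self_eigen hA
  have hU2 : U * Uᴴ = 1 := mul_self_star_eigen hA
  have hsp : A = U * D * Uᴴ := by
    have := hA.spectral_theorem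
    rw [← Matrix.star_eq_conjTranspose, hUdef, hDdef]
    rw [Unitary.conjStarAlgAut_apply] at this
    exact this
  set M := Uᴴ * B * U with hM
  have hB : B = U * M * Uᴴ := by
    rw [hM]
    simp only [Matrix.mul_assoc]
    rw [hU2, Matrix.mul_one, ← Matrix.mul_assoc, hU2, Matrix.one_mul]
  have hMD : M * D = D * M := by
    have h' : B * (U * D * Uᴴ) = (U * D * Uᴴ) * B := by rw [← hsp]; exact h
    have e1 : Uᴴ * (B * (U * D * Uᴴ)) * U = M * D := by
      rw [hM]
      simp only [Matrix.mul_assoc]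
      rw [hU1, Matrix.mul_one]
    have e2 : Uᴴ * ((U * D * Uᴴ) * B) * U = D * M := by
      rw [hM]
      simp only [Matrix.mul_assoc]
      rw [← Matrix.mul_assoc Uᴴ U, hU1, Matrix.one_mul]
    rw [← e1, ← e2, h']
  have hMDr : M * Matrix.diagonal (fun i => ((hA.eigenvalues i ^ r : ℝ) : ℂ)) =
      Matrix.diagonal (fun i => ((hA.eigenvalues i ^ r : ℝ) : ℂ)) * M :=
    diag_comm_funext (fun x => x ^ r) hMD
  rw [mrpow, dif_pos hA, ← hUdef]
  calc B * (U * Matrix.diagonal (fun i => ((hA.eigenvalues i ^ r : ℝ) : ℂ)) * Uᴴ)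
      = (U * M * Uᴴ) * (U * Matrix.diagonal (fun i => ((hA.eigenvalues i ^ r : ℝ) : ℂ)) * Uᴴ) := by
        rw [← hB]
    _ = U * (M * Matrix.diagonal (fun i => ((hA.eigenvalues i ^ r : ℝ) : ℂ))) * Uᴴ :=
        conj_mul_conj _ _ _ hU1
    _ = U * (Matrix.diagonal (fun i => ((hA.eigenvalues i ^ r : ℝ) : ℂ)) * M) * Uᴴ := by rw [hMDr]
    _ = (U * Matrix.diagonal (fun i => ((hA.eigenvalues i ^ r : ℝ) : ℂ)) * Uᴴ) * (U * M * Uᴴ) :=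
        (conj_mul_conj _ _ _ hU1).symm
    _ = (U * Matrix.diagonal (fun i => ((hA.eigenvalues i ^ r : ℝ) : ℂ)) * Uᴴ) * B := by rw [← hB]

lemma trace_re_nonneg' {A : Matrix n n ℂ} (hA : A.PosSemidef) : 0 ≤ A.trace.re := by
  have h : (0:ℂ) ≤ A.trace := by
    rw [Matrix.trace]
    apply Finset.sum_nonneg
    intro i _
    exact hA.diag_nonneg
  exact (Complex.le_def.mp h).1

lemma trace_mul_re_nonneg {A B : Matrix n n ℂ} (hA : A.PosSemidef) (hB : B.PosSemidef) :
    0 ≤ (A * B).trace.re := by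
  have hs : mrpow A (1/2) * mrpow A (1/2) = A := by
    rw [mrpow_mul_mrpow_psd hA (by norm_num) (by norm_num), add_halves, mrpow_one hA.1]
  have h1 : (A * B).trace = (mrpow A (1/2) * B * mrpow A (1/2)).trace := by
    rw [Matrix.trace_mul_cycle, hs]
  rw [h1]
  apply trace_re_nonneg'
  have := hB.mul_mul_conjTranspose_same (mrpow A (1/2))
  rwa [(mrpow_posSemidef hA (1/2)).1.eq] at this

lemma re_trace_mul_conjT {M : Matrix n n ℂ} (hM : M.IsHermitian) (V : Matrix n n ℂ) :
    (M * Vᴴ).trace.re = (M * V).trace.re := by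
  have h : (M * Vᴴ).trace = star ((M * V).trace) := by
    calc (M * Vᴴ).trace = (Vᴴ * M).trace := Matrix.trace_mul_comm _ _
      _ = (Vᴴ * Mᴴ).trace := by rw [hM.eq]
      _ = ((M * V)ᴴ).trace := by rw [Matrix.conjTranspose_mul]
      _ = star ((M * V).trace) := Matrix.trace_conjTranspose _
  rw [h, Complex.star_def, Complex.conj_re]

lemma smul_posSemidef {A : Matrix n n ℂ} (hA : A.PosSemidef) {c : ℝ} (hc : 0 ≤ c) :
    ((c : ℂ) • A).PosSemidef := by
  constructor
  · rw [Matrix.IsHermitian, Matrix.conjTranspose_smul, hA.1.eq, Complex.star_def,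
      Complex.conj_ofReal]
  · intro x
    have h0 : (0:ℂ) ≤ (c:ℂ) := by rw [Complex.zero_le_real]; exact hc
    exact (hA.smul h0).2 x

lemma key_ineq {W A : Matrix n n ℂ} (hW : W.PosSemidef) (hA : A.IsHermitian)
    (hc : A * W = W * A) (V : Matrix n n ℂ) :
    2 * ((W * A * V).trace.re) ≤ (A * (W * A)).trace.re + (W * (Vᴴ * V)).trace.re := by
  have hWA : (W * A).IsHermitian := by
    rw [Matrix.IsHermitian, Matrix.conjTranspose_mul, hA.eq, hW.1.eq, hc]
  have hp := hW.mul_mul_conjTranspose_same (V - A)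
  have hexp : (V - A) * W * (V - A)ᴴ = V * W * Vᴴ - V * (W * A) - A * W * Vᴴ + A * (W * A) := by
    rw [Matrix.conjTranspose_sub, hA.eq]
    noncomm_ring
  have htr := trace_re_nonneg' hp
  rw [hexp] at htr
  have h1 : (V * W * Vᴴ).trace = (W * (Vᴴ * V)).trace := by
    rw [Matrix.trace_mul_cycle, ← Matrix.mul_assoc, Matrix.trace_mul_comm, Matrix.mul_assoc]
  have h2 : (V * (W * A)).trace = (W * A * V).trace := Matrix.trace_mul_comm _ _
  have h3 : (A * W * Vᴴ).trace.re = (W * A * V).trace.re := by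
    rw [hc]; exact re_trace_mul_conjT hWA V
  simp only [Matrix.trace_add, Matrix.trace_sub, Complex.add_re, Complex.sub_re] at htr
  rw [h1, h2] at htr
  rw [h3] at htr
  linarith

lemma trace_mul_mono {W B C : Matrix n n ℂ} (hW : W.PosSemidef) (h : (B - C).PosSemidef) :
    (W * C).trace.re ≤ (W * B).trace.re := by
  have := trace_mul_re_nonneg hW h
  rw [Matrix.mul_sub, Matrix.trace_sub, Complex.sub_re] at this
  linarith

lemma smul_trace_re (r : ℝ) (M : Matrix n n ℂ) : (((r : ℂ) • M)).trace.re = r * M.trace.re := by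
  rw [Matrix.trace_smul, smul_eq_mul, Complex.re_ofReal_mul]

end Aux

section PaLemmas
set_option linter.unusedSectionVars false
variable {n : Type*} [Fintype n] [DecidableEq n] {ρ σ : Matrix n n ℂ}
variable (hρ : ρ.PosSemidef) (hσ : σ.PosDef) (hcomm : ρ * σ = σ * ρ)
include hρ hσ hcomm

lemma swap_pow (a b : ℝ) : mrpow σ b * mrpow ρ a = mrpow ρ a * mrpow σ b := by
  have h1 : ρ * mrpow σ b = mrpow σ b * ρ := commute_mrpow hσ.1 hcomm b
  exact commute_mrpow hρ.1 h1.symm a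

lemma Pa_mul {a a' : ℝ} (b b' : ℝ) (ha : 0 ≤ a) (ha' : 0 ≤ a') :
    (mrpow ρ a * mrpow σ b) * (mrpow ρ a' * mrpow σ b') =
      mrpow ρ (a + a') * mrpow σ (b + b') := by
  calc (mrpow ρ a * mrpow σ b) * (mrpow ρ a' * mrpow σ b')
      = mrpow ρ a * (mrpow σ b * mrpow ρ a') * mrpow σ b' := by simp only [Matrix.mul_assoc]
    _ = mrpow ρ a * (mrpow ρ a' * mrpow σ b) * mrpow σ b' := by rw [swap_pow hρ hσ hcomm]
    _ = (mrpow ρ a * mrpow ρ a') * (mrpow σ b * mrpow σ b') := by simp only [Matrix.mul_assoc]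
    _ = mrpow ρ (a + a') * mrpow σ (b + b') := by
        rw [mrpow_mul_mrpow_psd hρ ha ha', mrpow_mul_mrpow_pd hσ]

lemma Pa_herm (a b : ℝ) : ((mrpow ρ a * mrpow σ b)).IsHermitian := by
  rw [Matrix.IsHermitian, Matrix.conjTranspose_mul, (mrpow_isHermitian hσ.1 b).eq,
    (mrpow_isHermitian hρ.1 a).eq, swap_pow hρ hσ hcomm]

lemma Pa_psd {a : ℝ} (b : ℝ) (ha : 0 ≤ a) : ((mrpow ρ a * mrpow σ b)).PosSemidef := by
  have key : (mrpow ρ (a/2))ᴴ * mrpow σ b * mrpow ρ (a/2) = mrpow ρ a * mrpow σ b := by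
    rw [(mrpow_isHermitian hρ.1 (a/2)).eq, Matrix.mul_assoc, swap_pow hρ hσ hcomm,
      ← Matrix.mul_assoc, mrpow_mul_mrpow_psd hρ (by linarith) (by linarith)]
    norm_num
  rw [← key]
  exact (mrpow_posSemidef hσ.posSemidef b).conjTranspose_mul_mul_same _

lemma rho_mul_Pa {a : ℝ} (b : ℝ) (ha : 0 ≤ a) :
    ρ * (mrpow ρ a * mrpow σ b) = mrpow ρ (1 + a) * mrpow σ b := by
  rw [← mrpow_mul_mrpow_psd hρ zero_le_one ha, mrpow_one hρ.1, Matrix.mul_assoc]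

lemma sigma_mul_Pa (a b : ℝ) :
    σ * (mrpow ρ a * mrpow σ b) = mrpow ρ a * mrpow σ (1 + b) := by
  have h1 : σ * mrpow ρ a = mrpow ρ a * σ := commute_mrpow hρ.1 hcomm.symm a
  rw [← Matrix.mul_assoc, h1, Matrix.mul_assoc, ← mrpow_mul_mrpow_pd hσ 1 b, mrpow_one hσ.1]

end PaLemmas


section Gdefs
variable {n : Type*} [Fintype n] [DecidableEq n]

noncomputable def GAm (ρ σ : Matrix n n ℂ) (k m : ℕ) : Matrix n n ℂ :=
  mrpow ρ ((2:ℝ)^m / ((2:ℝ)^k - 1)) * mrpow σ (-((2:ℝ)^m / ((2:ℝ)^k - 1)))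

noncomputable def GWm (ρ σ : Matrix n n ℂ) (k m : ℕ) : Matrix n n ℂ :=
  ((alphaIM k / 2^(m+1) : ℝ) : ℂ) •
    (mrpow ρ (((2:ℝ)^k - (2:ℝ)^(m+1)) / ((2:ℝ)^k - 1)) *
     mrpow σ (((2:ℝ)^(m+1) - 1) / ((2:ℝ)^k - 1)))

end Gdefs

section Glemmas
set_option linter.unusedSectionVars false
set_option maxHeartbeats 1000000
variable {n : Type*} [Fintype n] [DecidableEq n] {ρ σ : Matrix n n ℂ}
variable (hρ : ρ.PosSemidef) (hσ : σ.PosDef) (hcomm : ρ * σ = σ * ρ) {k : ℕ} (hk : 1 ≤ k)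
include hρ hσ hcomm hk

-- scalar helpers
omit hρ hσ hcomm in
lemma hc0' : (0:ℝ) < (2:ℝ)^k - 1 := by
  have : (2:ℝ)^1 ≤ (2:ℝ)^k := pow_le_pow_right₀ one_le_two hk
  norm_num at this ⊢; linarith

omit hρ hσ hcomm in
lemma alpha_pos' : 0 < alphaIM k := by
  have h := hc0' hk
  have h2 : 0 < 1/((2:ℝ)^k - 1) := one_div_pos.mpr h
  rw [alphaIM]; linarith

omit hρ hσ hcomm in
lemma alpha_eq' : alphaIM k = (2:ℝ)^k / ((2:ℝ)^k - 1) := by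
  have h2 : ((2:ℝ)^k - 1) ≠ 0 := (hc0' hk).ne'
  rw [alphaIM]
  field_simp
  ring

lemma GAm_herm (m : ℕ) : (GAm ρ σ k m).IsHermitian := Pa_herm hρ hσ hcomm _ _

lemma GAm_psd (m : ℕ) : (GAm ρ σ k m).PosSemidef :=
  Pa_psd hρ hσ hcomm _ (div_nonneg (by positivity) (hc0' hk).le)


lemma GWm_psd (m : ℕ) (hm : m + 1 ≤ k) : (GWm ρ σ k m).PosSemidef := by
  have hc := hc0' (k := k) hk
  have hp : ((2:ℝ)^(m+1)) ≤ (2:ℝ)^k := pow_le_pow_right₀ one_le_two hm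
  refine smul_posSemidef (Pa_psd hρ hσ hcomm _ (div_nonneg (by linarith) hc.le)) ?_
  have := alpha_pos' (k := k) hk
  positivity

lemma GWm_herm (m : ℕ) (hm : m + 1 ≤ k) : (GWm ρ σ k m).IsHermitian := (GWm_psd hρ hσ hcomm hk m hm).1

lemma GAm_sq (m : ℕ) : GAm ρ σ k m * GAm ρ σ k m = GAm ρ σ k (m+1) := by
  rw [GAm, GAm, Pa_mul hρ hσ hcomm _ _ (div_nonneg (by positivity) (hc0' hk).le)
    (div_nonneg (by positivity) (hc0' hk).le)]
  have e1 : (2:ℝ)^m / ((2:ℝ)^k - 1) + (2:ℝ)^m / ((2:ℝ)^k - 1) = (2:ℝ)^(m+1) / ((2:ℝ)^k - 1) := by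
    rw [pow_succ]; ring
  have e2 : -((2:ℝ)^m / ((2:ℝ)^k - 1)) + -((2:ℝ)^m / ((2:ℝ)^k - 1)) =
      -((2:ℝ)^(m+1) / ((2:ℝ)^k - 1)) := by rw [pow_succ]; ring
  rw [e1, e2]

lemma GAm_comm_GWm (m : ℕ) (hm : m + 1 ≤ k) :
    GAm ρ σ k m * GWm ρ σ k m = GWm ρ σ k m * GAm ρ σ k m := by
  have hc := hc0' (k := k) hk
  have hp : ((2:ℝ)^(m+1)) ≤ (2:ℝ)^k := pow_le_pow_right₀ one_le_two hm
  have hg : (0:ℝ) ≤ (2:ℝ)^m / ((2:ℝ)^k - 1) := div_nonneg (by positivity) hc.le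
  have he : (0:ℝ) ≤ ((2:ℝ)^k - (2:ℝ)^(m+1)) / ((2:ℝ)^k - 1) := div_nonneg (by linarith) hc.le
  rw [GAm, GWm, Matrix.mul_smul, Matrix.smul_mul,
    Pa_mul hρ hσ hcomm _ _ hg he, Pa_mul hρ hσ hcomm _ _ he hg,
    add_comm ((2:ℝ)^m / ((2:ℝ)^k - 1)), add_comm (-((2:ℝ)^m / ((2:ℝ)^k - 1)))]

lemma GAWA (m : ℕ) (hm : m + 1 ≤ k) :
    GAm ρ σ k m * (GWm ρ σ k m * GAm ρ σ k m) =
      ((alphaIM k / 2^(m+1) : ℝ) : ℂ) • (mrpow ρ (alphaIM k) * mrpow σ (1 - alphaIM k)) := by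
  have hc := hc0' (k := k) hk
  have hp : ((2:ℝ)^(m+1)) ≤ (2:ℝ)^k := pow_le_pow_right₀ one_le_two hm
  have hg : (0:ℝ) ≤ (2:ℝ)^m / ((2:ℝ)^k - 1) := div_nonneg (by positivity) hc.le
  have he : (0:ℝ) ≤ ((2:ℝ)^k - (2:ℝ)^(m+1)) / ((2:ℝ)^k - 1) := div_nonneg (by linarith) hc.le
  rw [GAm, GWm, Matrix.smul_mul, Matrix.mul_smul,
    Pa_mul hρ hσ hcomm _ _ he hg, Pa_mul hρ hσ hcomm _ _ hg (by linarith)]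
  have eρ : (2:ℝ)^m/((2:ℝ)^k-1) + (((2:ℝ)^k - (2:ℝ)^(m+1))/((2:ℝ)^k-1) + (2:ℝ)^m/((2:ℝ)^k-1)) =
      alphaIM k := by
    rw [alpha_eq' (k := k) hk, pow_succ]; field_simp; ring
  have eσ : -((2:ℝ)^m/((2:ℝ)^k-1)) + (((2:ℝ)^(m+1)-1)/((2:ℝ)^k-1) + -((2:ℝ)^m/((2:ℝ)^k-1))) =
      1 - alphaIM k := by
    rw [alphaIM, pow_succ]; field_simp; ring
  rw [eρ, eσ]

lemma GW_step (m : ℕ) (hm : m + 2 ≤ k) :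
    GWm ρ σ k m = (2:ℂ) • (GWm ρ σ k (m+1) * GAm ρ σ k (m+1)) := by
  have hc := hc0' (k := k) hk
  have hp : ((2:ℝ)^(m+2)) ≤ (2:ℝ)^k := pow_le_pow_right₀ one_le_two hm
  have hg : (0:ℝ) ≤ (2:ℝ)^(m+1) / ((2:ℝ)^k - 1) := div_nonneg (by positivity) hc.le
  have he : (0:ℝ) ≤ ((2:ℝ)^k - (2:ℝ)^(m+2)) / ((2:ℝ)^k - 1) := div_nonneg (by linarith) hc.le
  rw [GWm, GWm, GAm, Matrix.smul_mul, Pa_mul hρ hσ hcomm _ _ he hg, smul_smul]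
  have hsc : (2:ℂ) * ((alphaIM k / 2^(m+1+1) : ℝ) : ℂ) = ((alphaIM k / 2^(m+1) : ℝ) : ℂ) := by
    push_cast
    rw [pow_succ]
    field_simp
  rw [hsc]
  have e1 : ((2:ℝ)^k - (2:ℝ)^(m+1+1)) / ((2:ℝ)^k - 1) + (2:ℝ)^(m+1) / ((2:ℝ)^k - 1) =
      ((2:ℝ)^k - (2:ℝ)^(m+1)) / ((2:ℝ)^k - 1) := by
    rw [pow_succ ((2:ℝ)) (m+1)]; ring
  have e2 : ((2:ℝ)^(m+1+1) - 1) / ((2:ℝ)^k - 1) + -((2:ℝ)^(m+1) / ((2:ℝ)^k - 1)) =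
      ((2:ℝ)^(m+1) - 1) / ((2:ℝ)^k - 1) := by
    rw [pow_succ ((2:ℝ)) (m+1)]; ring
  rw [e1, e2]

lemma GW_zero : GWm ρ σ k 0 * GAm ρ σ k 0 = ((alphaIM k / 2 : ℝ) : ℂ) • ρ := by
  have hc := hc0' (k := k) hk
  have hp : ((2:ℝ)^(0+1)) ≤ (2:ℝ)^k := pow_le_pow_right₀ one_le_two hk
  have hg : (0:ℝ) ≤ (2:ℝ)^0 / ((2:ℝ)^k - 1) := div_nonneg (by positivity) hc.le
  have he : (0:ℝ) ≤ ((2:ℝ)^k - (2:ℝ)^(0+1)) / ((2:ℝ)^k - 1) := div_nonneg (by linarith) hc.le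
  rw [GWm, GAm, Matrix.smul_mul, Pa_mul hρ hσ hcomm _ _ he hg]
  have e1 : ((2:ℝ)^k - (2:ℝ)^(0+1)) / ((2:ℝ)^k - 1) + (2:ℝ)^0 / ((2:ℝ)^k - 1) = 1 := by
    field_simp
    ring
  have e2 : ((2:ℝ)^(0+1) - 1) / ((2:ℝ)^k - 1) + -((2:ℝ)^0 / ((2:ℝ)^k - 1)) = 0 := by
    norm_num
  rw [e1, e2, mrpow_one hρ.1, mrpow_zero hσ.1, mul_one]
  norm_num

lemma GW_top : GWm ρ σ k (k-1) = ((alphaIM k - 1 : ℝ) : ℂ) • σ := by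
  have hc := hc0' (k := k) hk
  have hkk : k - 1 + 1 = k := Nat.succ_pred_eq_of_pos hk
  rw [GWm, hkk]
  have e1 : ((2:ℝ)^k - (2:ℝ)^k) / ((2:ℝ)^k - 1) = 0 := by simp
  have e2 : ((2:ℝ)^k - 1) / ((2:ℝ)^k - 1) = 1 := div_self hc.ne'
  rw [e1, e2, mrpow_zero hρ.1, mrpow_one hσ.1, one_mul]
  have e3 : alphaIM k / 2^k = alphaIM k - 1 := by
    have hne2 : ((2:ℝ)^k) ≠ 0 := by positivity
    rw [alphaIM]
    field_simp
    ring
  rw [e3]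

lemma rho_GA0 : ρ * GAm ρ σ k 0 = mrpow ρ (alphaIM k) * mrpow σ (1 - alphaIM k) := by
  have hc := hc0' (k := k) hk
  rw [GAm, rho_mul_Pa hρ hσ hcomm _ (div_nonneg (by positivity) hc.le)]
  have e1 : 1 + (2:ℝ)^0 / ((2:ℝ)^k - 1) = alphaIM k := by rw [alphaIM]; norm_num
  have e2 : -((2:ℝ)^0 / ((2:ℝ)^k - 1)) = 1 - alphaIM k := by rw [alphaIM]; norm_num
  rw [e1, e2]

lemma sigma_GAk : σ * GAm ρ σ k k = mrpow ρ (alphaIM k) * mrpow σ (1 - alphaIM k) := by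
  have hc := hc0' (k := k) hk
  rw [GAm, sigma_mul_Pa hρ hσ hcomm]
  have e1 : (2:ℝ)^k / ((2:ℝ)^k - 1) = alphaIM k := (alpha_eq' (k := k) hk).symm
  rw [e1, sub_eq_add_neg]

end Glemmas

set_option maxHeartbeats 2000000 in
/-- for commuting `ρ` and `σ`, the iterated mean divergence reduces to the
classical Rényi divergence. -/
theorem stmt_10 (d k : ℕ) (hk : 1 ≤ k) (ρ σ : Matrix (Fin d) (Fin d) ℂ)
    (hρ : ρ.PosSemidef) (hρtr : ρ.trace = 1) (hσ : σ.PosDef)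
    (hcomm : ρ * σ = σ * ρ) :
    Qim k ρ σ = (mrpow ρ (alphaIM k) * mrpow σ (1 - alphaIM k)).trace.re ∧
    Dim k ρ σ = (1 / (alphaIM k - 1)) *
      Real.log ((mrpow ρ (alphaIM k) * mrpow σ (1 - alphaIM k)).trace.re) := by
  have hc := hc0' (k := k) hk
  have hαpos := alpha_pos' (k := k) hk
  have hα1 : alphaIM k - 1 = 1 / ((2:ℝ)^k - 1) := by rw [alphaIM]; ring
  have hα1pos : 0 ≤ alphaIM k - 1 := by rw [hα1]; positivity
  set Qre : ℝ := (mrpow ρ (alphaIM k) * mrpow σ (1 - alphaIM k)).trace.re with hQre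
  -- upper bound
  have hub : ∀ V Z, QimFeasible k V Z → QimObj k ρ σ V Z ≤ Qre := by
    rintro V Z ⟨hZ, hV1, hmid, hlast⟩
    have chain : ∀ m, m < k →
        2 * ((GWm ρ σ k (k-1-m) * GAm ρ σ k (k-1-m) * V (k-m)).trace.re) ≤
          ((alphaIM k - 1) * ((2:ℝ)^(m+1) - 1)) * Qre +
            (alphaIM k - 1) * (σ * Z).trace.re := by
      intro m
      induction m with
      | zero =>
        intro _
        have h1k : (k-1) + 1 ≤ k := by omega
        have hkey := key_ineq (GWm_psd hρ hσ hcomm hk (k-1) h1k)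
          (GAm_herm hρ hσ hcomm hk (k-1)) (GAm_comm_GWm hρ hσ hcomm hk (k-1) h1k) (V k)
        have hkk : k - 1 + 1 = k := by omega
        have hterm1 : (GAm ρ σ k (k-1) * (GWm ρ σ k (k-1) * GAm ρ σ k (k-1))).trace.re =
            (alphaIM k - 1) * Qre := by
          rw [GAWA hρ hσ hcomm hk (k-1) h1k, smul_trace_re, ← hQre]
          congr 1
          rw [hkk]
          have hne2 : ((2:ℝ)^k) ≠ 0 := by positivity
          rw [alphaIM]
          field_simp
          ring
        have hterm2 : (GWm ρ σ k (k-1) * ((V k)ᴴ * V k)).trace.re ≤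
            (alphaIM k - 1) * (σ * Z).trace.re := by
          rw [GW_top hρ hσ hcomm hk, Matrix.smul_mul, smul_trace_re]
          exact mul_le_mul_of_nonneg_left (trace_mul_mono hσ.posSemidef hlast) hα1pos
        have hco : ((alphaIM k - 1) * ((2:ℝ)^(0+1) - 1)) * Qre = (alphaIM k - 1) * Qre := by
          norm_num
        rw [hco]
        simp only [Nat.sub_zero]
        linarith
      | succ m ih =>
        intro hsm
        have ih' := ih (by omega)
        have hj : (k-1-(m+1)) + 1 ≤ k := by omega
        have hidx1 : k-1-(m+1)+1 = k-1-m := by omega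
        have hidx2 : k-(m+1)+1 = k-m := by omega
        have hkey := key_ineq (GWm_psd hρ hσ hcomm hk (k-1-(m+1)) hj)
          (GAm_herm hρ hσ hcomm hk (k-1-(m+1)))
          (GAm_comm_GWm hρ hσ hcomm hk (k-1-(m+1)) hj) (V (k-(m+1)))
        have hterm1 : (GAm ρ σ k (k-1-(m+1)) *
            (GWm ρ σ k (k-1-(m+1)) * GAm ρ σ k (k-1-(m+1)))).trace.re =
            (alphaIM k / 2^(k-1-(m+1)+1)) * Qre := by
          rw [GAWA hρ hσ hcomm hk (k-1-(m+1)) hj, smul_trace_re, ← hQre]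
        have hcon := hmid (k-(m+1)) (by omega) (by omega)
        rw [hidx2] at hcon
        have hcon' : ((2 : ℂ)⁻¹ • (V (k-m) + (V (k-m))ᴴ) -
            (V (k-(m+1)))ᴴ * V (k-(m+1))).PosSemidef := hcon
        have hterm2a := trace_mul_mono (GWm_psd hρ hσ hcomm hk (k-1-(m+1)) hj) hcon'
        have hterm2b : (GWm ρ σ k (k-1-(m+1)) *
            ((2 : ℂ)⁻¹ • (V (k-m) + (V (k-m))ᴴ))).trace.re =
            (GWm ρ σ k (k-1-(m+1)) * V (k-m)).trace.re := by
          rw [Matrix.mul_smul, Matrix.mul_add, Matrix.trace_smul, smul_eq_mul]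
          have h2i : (2:ℂ)⁻¹ = ((2⁻¹:ℝ):ℂ) := by norm_num
          rw [h2i, Complex.re_ofReal_mul, Matrix.trace_add, Complex.add_re,
            re_trace_mul_conjT (GWm_herm hρ hσ hcomm hk (k-1-(m+1)) hj)]
          ring
        have hterm2c : (GWm ρ σ k (k-1-(m+1)) * V (k-m)).trace.re =
            2 * ((GWm ρ σ k (k-1-m) * GAm ρ σ k (k-1-m) * V (k-m)).trace.re) := by
          conv_lhs => rw [GW_step hρ hσ hcomm hk (k-1-(m+1)) (by omega)]
          rw [hidx1, Matrix.smul_mul, Matrix.trace_smul, smul_eq_mul]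
          have h2r : (2:ℂ) = ((2:ℝ):ℂ) := by norm_num
          rw [h2r, Complex.re_ofReal_mul]
        have hsc : alphaIM k / 2^(k-1-(m+1)+1) = (alphaIM k - 1) * 2^(m+1) := by
          have hexp : (k-1-(m+1)+1) + (m+1) = k := by omega
          have h2 : (2:ℝ)^(k-1-(m+1)+1) * 2^(m+1) = 2^k := by rw [← pow_add, hexp]
          have hp1 : ((2:ℝ)^(k-1-(m+1)+1)) ≠ 0 := by positivity
          rw [hα1, alpha_eq' (k := k) hk]
          rw [div_div, div_eq_iff (by positivity : ((2:ℝ)^k - 1) * 2^(k-1-(m+1)+1) ≠ 0)]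
          field_simp
          linear_combination h2.symm
        have hco2 : ((alphaIM k - 1) * ((2:ℝ)^(m+1+1) - 1)) * Qre =
            ((alphaIM k - 1) * 2^(m+1)) * Qre +
              ((alphaIM k - 1) * ((2:ℝ)^(m+1) - 1)) * Qre := by
          rw [pow_succ]; ring
        rw [hco2]
        rw [hsc] at hterm1
        linarith
    -- use the chain at m = k-1
    have hch := chain (k-1) (by omega)
    have h00 : k-1-(k-1) = 0 := by omega
    have h01 : k-(k-1) = 1 := by omega
    have h02 : k-1+1 = k := by omega
    rw [h00, h01, h02] at hch
    have hone : (alphaIM k - 1) * ((2:ℝ)^k - 1) = 1 := by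
      rw [hα1]; field_simp
    rw [hone, one_mul] at hch
    have hρV1 : (ρ * (V 1 + (V 1)ᴴ)).trace.re = 2 * (ρ * V 1).trace.re := by
      rw [Matrix.mul_add, Matrix.trace_add, Complex.add_re, re_trace_mul_conjT hρ.1]
      ring
    have hV1b : alphaIM k * (ρ * V 1).trace.re =
        2 * ((GWm ρ σ k 0 * GAm ρ σ k 0 * V 1).trace.re) := by
      rw [GW_zero hρ hσ hcomm hk, Matrix.smul_mul, smul_trace_re]
      ring
    rw [QimObj, hρV1]
    have : alphaIM k * (2 * (ρ * V 1).trace.re / 2) = alphaIM k * (ρ * V 1).trace.re := by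
      ring
    rw [this, hV1b]
    linarith
  -- the optimal point
  have hzero : (0 : Matrix (Fin d) (Fin d) ℂ).PosSemidef := ⟨Matrix.isHermitian_zero, by simp⟩
  have hfeas : QimFeasible k (fun i => GAm ρ σ k (i-1)) (GAm ρ σ k k) := by
    refine ⟨GAm_psd hρ hσ hcomm hk k, ?_, ?_, ?_⟩
    · show (GAm ρ σ k 0 + (GAm ρ σ k 0)ᴴ).PosSemidef
      rw [(GAm_herm hρ hσ hcomm hk 0).eq]
      exact (GAm_psd hρ hσ hcomm hk 0).add (GAm_psd hρ hσ hcomm hk 0)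
    · intro i h1 h2
      show ((2 : ℂ)⁻¹ • (GAm ρ σ k i + (GAm ρ σ k i)ᴴ) -
        (GAm ρ σ k (i-1))ᴴ * GAm ρ σ k (i-1)).PosSemidef
      have hi : i - 1 + 1 = i := by omega
      have e : (2 : ℂ)⁻¹ • (GAm ρ σ k i + (GAm ρ σ k i)ᴴ) -
          (GAm ρ σ k (i-1))ᴴ * GAm ρ σ k (i-1) = 0 := by
        rw [(GAm_herm hρ hσ hcomm hk i).eq, (GAm_herm hρ hσ hcomm hk (i-1)).eq,
          GAm_sq hρ hσ hcomm hk (i-1), hi, ← two_smul ℂ (GAm ρ σ k i), smul_smul]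
        norm_num
      rw [e]; exact hzero
    · show (GAm ρ σ k k - (GAm ρ σ k (k-1))ᴴ * GAm ρ σ k (k-1)).PosSemidef
      have hi : k - 1 + 1 = k := by omega
      have e : GAm ρ σ k k - (GAm ρ σ k (k-1))ᴴ * GAm ρ σ k (k-1) = 0 := by
        rw [(GAm_herm hρ hσ hcomm hk (k-1)).eq, GAm_sq hρ hσ hcomm hk (k-1), hi, sub_self]
      rw [e]; exact hzero
  have hval : Qre = QimObj k ρ σ (fun i => GAm ρ σ k (i-1)) (GAm ρ σ k k) := by
    rw [QimObj]
    show Qre = alphaIM k * ((ρ * (GAm ρ σ k 0 + (GAm ρ σ k 0)ᴴ)).trace.re / 2) -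
      (alphaIM k - 1) * (σ * GAm ρ σ k k).trace.re
    rw [(GAm_herm hρ hσ hcomm hk 0).eq, Matrix.mul_add, Matrix.trace_add, Complex.add_re,
      rho_GA0 hρ hσ hcomm hk, sigma_GAk hρ hσ hcomm hk, ← hQre]
    ring
  have hgt : IsGreatest {q : ℝ | ∃ V Z, QimFeasible k V Z ∧ q = QimObj k ρ σ V Z} Qre := by
    constructor
    · exact ⟨_, _, hfeas, hval⟩
    · rintro q ⟨V, Z, hf, rfl⟩
      exact hub V Z hf
  have h1 : Qim k ρ σ = Qre := hgt.csSup_eq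
  exact ⟨h1, by rw [Dim, h1]⟩
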